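/- Let (E, Λ, p) be a locally Hilbert space model and let T ∈ 𝓛(E). Then there exists a unique map S ∈ 𝓛(E) such that ⟨T x, y⟩ = ⟨x, S y⟩ for all x, y ∈ E; moreover, for every λ ∈ Λ the restriction of S to p λ equals the Hilbert-space adjoint of the restriction T_λ : p λ → p λ. -/

import Mathlib

open scoped InnerProductSpace

/-- The orthogonal projection of an inner product space onto a complete submodule,
viewed as a continuous linear map of the ambient space into itself. -/
noncomputable def projL {E : Type*} [NormedAddCommGroup E] [InnerProductSpace ℂ E]
    (K : Submodule ℂ E) [CompleteSpace K] : E →L[ℂ] E :=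
  K.subtypeL.comp K.orthogonalProjectionOnto

/-- An element of `𝓛(E)` for the locally Hilbert space model determined by the family `p`:
a linear map on `E` leaving each `p l` invariant, whose restriction to each `p l` is a
continuous (bounded) operator, and which commutes with each orthogonal projection `projL (p l)`. -/
structure LocOp {E : Type*} [NormedAddCommGroup E] [InnerProductSpace ℂ E]
    {Λ : Type*} (p : Λ → Submodule ℂ E) [∀ l, CompleteSpace (p l)] where
  toFun : E →ₗ[ℂ] E
  restr : ∀ l, p l →L[ℂ] p l
  restr_eq : ∀ l (x : p l), (restr l x : E) = toFun x
  proj_comm : ∀ l (x : E), toFun (projL (p l) x) = projL (p l) (toFun x)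

section Aux

variable {E : Type*} [NormedAddCommGroup E] [InnerProductSpace ℂ E]

lemma projL_mem (K : Submodule ℂ E) [CompleteSpace K] (x : E) : projL K x ∈ K := by
  simp [projL]

lemma projL_self_adjoint (K : Submodule ℂ E) [CompleteSpace K] (x y : E) :
    ⟪projL K x, y⟫_ℂ = ⟪x, projL K y⟫_ℂ :=
  Submodule.inner_starProjection_left_eq_right K x y

lemma projL_of_mem (K : Submodule ℂ E) [CompleteSpace K] {x : E} (hx : x ∈ K) :
    projL K x = x := by
  simpa [projL] using congrArg (Subtype.val)
    (Submodule.orthogonalProjectionOnto_mem_subspace_eq_self (⟨x, hx⟩ : K))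

/-- Two elements of a submodule are equal if they have the same inner products against all
elements of the submodule. -/
lemma Submodule.ext_inner {K : Submodule ℂ E} {a b : K}
    (h : ∀ y : K, ⟪(y : E), (a : E)⟫_ℂ = ⟪(y : E), (b : E)⟫_ℂ) : a = b :=
  ext_inner_left ℂ fun y => h y

variable {Λ : Type*} [Preorder Λ] {p : Λ → Submodule ℂ E} [∀ l, CompleteSpace (p l)]

lemma LocOp.inner_adj (T : LocOp p) (l : Λ) (y z : p l) :
    ⟪(y : E), ((ContinuousLinearMap.adjoint (T.restr l)) z : E)⟫_ℂ
      = ⟪T.toFun y, (z : E)⟫_ℂ := by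
  rw [← Submodule.coe_inner, ContinuousLinearMap.adjoint_inner_right,
    Submodule.coe_inner, T.restr_eq]

/-- Key compatibility: the adjoints of the restrictions of `T` are coherent along `l ≤ μ`. -/
lemma LocOp.adj_compat (T : LocOp p) (hmono : Monotone p) {l μ : Λ} (h : l ≤ μ)
    (x : E) (hx : x ∈ p l) :
    ((ContinuousLinearMap.adjoint (T.restr μ)) ⟨x, hmono h hx⟩ : E)
      = ((ContinuousLinearMap.adjoint (T.restr l)) ⟨x, hx⟩ : E) := by
  set a : p μ := (ContinuousLinearMap.adjoint (T.restr μ)) ⟨x, hmono h hx⟩ with ha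
  -- Step 1: `a` lies in `p l`.
  have hmemμ : ∀ z : E, z ∈ p l → z ∈ p μ := fun z hz => hmono h hz
  have hstep : ∀ y : p μ, ⟪(y : E), (a : E)⟫_ℂ = ⟪T.toFun y, x⟫_ℂ := fun y =>
    T.inner_adj μ y ⟨x, hmono h hx⟩
  have haP : projL (p l) (a : E) = (a : E) := by
    have h1 : (⟨projL (p l) (a : E), hmemμ _ (projL_mem _ _)⟩ : p μ) = a := by
      apply Submodule.ext_inner
      intro y
      have hy : ⟪(y : E), projL (p l) (a : E)⟫_ℂ = ⟪projL (p l) (y : E), (a : E)⟫_ℂ :=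
        (projL_self_adjoint (p l) (y : E) (a : E)).symm
      rw [hy]
      have h2 := hstep ⟨projL (p l) (y : E), hmemμ _ (projL_mem _ _)⟩
      rw [h2, T.proj_comm, projL_self_adjoint, projL_of_mem _ hx, hstep y]
    exact congrArg Subtype.val h1
  have hal : (a : E) ∈ p l := haP ▸ projL_mem (p l) (a : E)
  -- Step 2: `a` equals the adjoint taken in `p l`.
  have h3 : (⟨(a : E), hal⟩ : p l) = (ContinuousLinearMap.adjoint (T.restr l)) ⟨x, hx⟩ := by
    apply Submodule.ext_inner
    intro z
    rw [T.inner_adj l z ⟨x, hx⟩]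
    exact hstep ⟨(z : E), hmemμ _ z.2⟩
  exact congrArg Subtype.val h3

end Aux

/-- **Existence and uniqueness of the adjoint in `𝓛(ℍ)`.**  For a locally Hilbert space
model `(E, Λ, p)` and `T ∈ 𝓛(E)` there is a unique `S ∈ 𝓛(E)` with
`⟪T x, y⟫ = ⟪x, S y⟫` for all `x y`, and the restriction of `S` to each `p l` is the
Hilbert-space adjoint of the restriction of `T`. -/
theorem locOp_exists_unique_adjoint
    {E : Type*} [NormedAddCommGroup E] [InnerProductSpace ℂ E]
    {Λ : Type*} [PartialOrder Λ] [IsDirected Λ (· ≤ ·)]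
    (p : Λ → Submodule ℂ E) [∀ l, CompleteSpace (p l)]
    (hmono : Monotone p) (hexh : ∀ x : E, ∃ l, x ∈ p l)
    (T : LocOp p) :
    ∃ S : LocOp p,
      (∀ x y : E, ⟪T.toFun x, y⟫_ℂ = ⟪x, S.toFun y⟫_ℂ) ∧
      (∀ l, S.restr l = ContinuousLinearMap.adjoint (T.restr l)) ∧
      (∀ S' : LocOp p, (∀ x y : E, ⟪T.toFun x, y⟫_ℂ = ⟪x, S'.toFun y⟫_ℂ) →
        S'.toFun = S.toFun) := by
  classical
  -- the underlying function of the adjoint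
  set g : E → E := fun x =>
    ((ContinuousLinearMap.adjoint (T.restr (hexh x).choose))
      ⟨x, (hexh x).choose_spec⟩ : E) with hg
  have gspec : ∀ (l : Λ) (x : E) (hx : x ∈ p l),
      g x = ((ContinuousLinearMap.adjoint (T.restr l)) ⟨x, hx⟩ : E) := by
    intro l x hx
    obtain ⟨μ, h1, h2⟩ := directed_of (· ≤ ·) (hexh x).choose l
    exact (T.adj_compat hmono h1 x (hexh x).choose_spec).symm.trans
      (T.adj_compat hmono h2 x hx)
  have gmem : ∀ (l : Λ) (x : E), x ∈ p l → g x ∈ p l := by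
    intro l x hx
    rw [gspec l x hx]; exact Subtype.mem _
  have gadd : ∀ x y : E, g (x + y) = g x + g y := by
    intro x y
    obtain ⟨l, hl⟩ := hexh x
    obtain ⟨l', hl'⟩ := hexh y
    obtain ⟨μ, h1, h2⟩ := directed_of (· ≤ ·) l l'
    have hx : x ∈ p μ := hmono h1 hl
    have hy : y ∈ p μ := hmono h2 hl'
    have hxy : x + y ∈ p μ := add_mem hx hy
    rw [gspec μ x hx, gspec μ y hy, gspec μ _ hxy]
    have : (⟨x + y, hxy⟩ : p μ) = ⟨x, hx⟩ + ⟨y, hy⟩ := rfl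
    rw [this, map_add]; rfl
  have gsmul : ∀ (c : ℂ) (x : E), g (c • x) = c • g x := by
    intro c x
    obtain ⟨l, hl⟩ := hexh x
    rw [gspec l x hl, gspec l _ (Submodule.smul_mem _ c hl)]
    have : (⟨c • x, Submodule.smul_mem _ c hl⟩ : p l) = c • ⟨x, hl⟩ := rfl
    rw [this, map_smul]; rfl
  have gadj : ∀ x y : E, ⟪T.toFun x, y⟫_ℂ = ⟪x, g y⟫_ℂ := by
    intro x y
    obtain ⟨l, hl⟩ := hexh x
    obtain ⟨l', hl'⟩ := hexh y
    obtain ⟨μ, h1, h2⟩ := directed_of (· ≤ ·) l l'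
    have hx : x ∈ p μ := hmono h1 hl
    have hy : y ∈ p μ := hmono h2 hl'
    rw [gspec μ y hy, T.inner_adj μ ⟨x, hx⟩ ⟨y, hy⟩]
  have gproj : ∀ (l : Λ) (x : E), g (projL (p l) x) = projL (p l) (g x) := by
    intro l x
    obtain ⟨l', hl'⟩ := hexh x
    obtain ⟨μ, h1, h2⟩ := directed_of (· ≤ ·) l l'
    have hx : x ∈ p μ := hmono h2 hl'
    have hmemμ : ∀ z : E, z ∈ p l → z ∈ p μ := fun z hz => hmono h1 hz
    have hPx : projL (p l) x ∈ p μ := hmemμ _ (projL_mem _ _)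
    rw [gspec μ x hx, gspec μ _ hPx]
    have key : ((ContinuousLinearMap.adjoint (T.restr μ)) ⟨projL (p l) x, hPx⟩ : E)
        = projL (p l) ((ContinuousLinearMap.adjoint (T.restr μ)) ⟨x, hx⟩ : E) := by
      set a : p μ := (ContinuousLinearMap.adjoint (T.restr μ)) ⟨x, hx⟩ with ha
      have hPa : projL (p l) (a : E) ∈ p μ := hmemμ _ (projL_mem _ _)
      have h3 : (ContinuousLinearMap.adjoint (T.restr μ)) ⟨projL (p l) x, hPx⟩
          = (⟨projL (p l) (a : E), hPa⟩ : p μ) := by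
        apply Submodule.ext_inner
        intro y
        rw [T.inner_adj μ y ⟨projL (p l) x, hPx⟩]
        have c1 : ⟪T.toFun y, projL (p l) x⟫_ℂ = ⟪projL (p l) (T.toFun y), x⟫_ℂ :=
          (projL_self_adjoint (p l) (T.toFun y) x).symm
        have c2 : ⟪(y : E), projL (p l) (a : E)⟫_ℂ = ⟪projL (p l) (y : E), (a : E)⟫_ℂ :=
          (projL_self_adjoint (p l) (y : E) (a : E)).symm
        rw [c1, c2, ← T.proj_comm]
        exact (T.inner_adj μ ⟨projL (p l) (y : E), hmemμ _ (projL_mem _ _)⟩ ⟨x, hx⟩).symm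
      exact congrArg Subtype.val h3
    exact key
  -- assemble the LocOp
  refine ⟨{ toFun := { toFun := g, map_add' := gadd, map_smul' := gsmul }
            restr := fun l => ContinuousLinearMap.adjoint (T.restr l)
            restr_eq := fun l x => by
              simp only [LinearMap.coe_mk, AddHom.coe_mk]
              exact (gspec l (x : E) x.2).symm
            proj_comm := gproj }, ?_, fun l => rfl, ?_⟩
  · exact gadj
  · intro S' hS'
    ext y
    apply ext_inner_left ℂ
    intro v
    rw [← hS' v y]
    exact gadj v y
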